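/- Let $n \geq 1$ and $m \geq 0$ be integers. For every partition $\mu$ of $n$, $$m \cdot (\ell(\mu)-1) - n - b(\mu) + \binom{\ell(\mu)+1}{2} \leq m(n-1),$$ with equality if and only if $\mu = (1^n)$ is the partition of $n$ into $n$ parts equal to $1$. (This is the uniqueness-of-maximizer claim used in the paper to show that the $q$-degree of $\Delta'_{s_\nu} e_n|_{t=0}$ is $(n-1)m - b(\nu)$.) -/

import Mathlib

open Finset

private lemma all_one_aux (L : List ℕ) (h : ∀ x ∈ L, 0 < x) (hs : L.sum = L.length) :
    L = List.replicate L.length 1 := by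
  induction L with
  | nil => simp
  | cons a t ih =>
    have ht : t.length ≤ t.sum := by
      have := List.card_nsmul_le_sum (l := t) (n := 1)
        (fun x hx => h x (List.mem_cons_of_mem _ hx))
      simpa using this
    have ha : 0 < a := h a (List.mem_cons_self)
    simp only [List.sum_cons, List.length_cons] at hs
    have ha1 : a = 1 := by omega
    have hts : t.sum = t.length := by omega
    have := ih (fun x hx => h x (List.mem_cons_of_mem _ hx)) hts
    simp [ha1, List.replicate_succ, ← this]

/-- The uniqueness-of-maximizer claim used to compute the `q`-degree of
`Δ'_{s_ν} e_n |_{t=0}`: a partition `μ ⊢ n` is represented as a weakly decreasing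
list `L` of positive integers summing to `n`, `ℓ(μ) = L.length`, and
`b(μ) = ∑ᵢ μᵢ (i-1)` (indexing parts from `1`). -/
theorem degree_maximizer (n m : ℕ) (hn : 1 ≤ n)
    (L : List ℕ) (hsort : L.Pairwise (· ≥ ·)) (hpos : ∀ x ∈ L, 0 < x) (hsum : L.sum = n) :
    ((m : ℤ) * ((L.length : ℤ) - 1) - (n : ℤ) -
        (∑ i ∈ Finset.range L.length, (L.getD i 0 : ℤ) * (i : ℤ)) +
        (Nat.choose (L.length + 1) 2 : ℤ) ≤ (m : ℤ) * ((n : ℤ) - 1))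
    ∧ ((m : ℤ) * ((L.length : ℤ) - 1) - (n : ℤ) -
        (∑ i ∈ Finset.range L.length, (L.getD i 0 : ℤ) * (i : ℤ)) +
        (Nat.choose (L.length + 1) 2 : ℤ) = (m : ℤ) * ((n : ℤ) - 1)
      ↔ L = List.replicate n 1) := by
  set k := L.length with hk
  have hkn : k ≤ n := by
    have := List.card_nsmul_le_sum (l := L) (n := 1) hpos
    simpa [hsum] using this
  have hknZ : (k : ℤ) ≤ (n : ℤ) := by exact_mod_cast hkn
  have hid0 : ∀ j : ℕ, ∑ i ∈ range j, (i : ℤ) = (j.choose 2 : ℤ) := by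
    intro j
    have h0 : ∑ i ∈ range j, i = j.choose 2 := by
      rw [Nat.choose_two_right, Finset.sum_range_id]
    calc ∑ i ∈ range j, (i : ℤ) = ((∑ i ∈ range j, i : ℕ) : ℤ) := by push_cast; rfl
      _ = _ := by rw [h0]
  have hid := hid0 k
  have hchoose0 : ∀ j : ℕ, ((j + 1).choose 2 : ℤ) = (j.choose 2 : ℤ) + j := by
    intro j; rw [Nat.choose_succ_succ]; push_cast [Nat.choose_one_right]; ring
  have hchoose := hchoose0 k
  have hS : (∑ i ∈ range k, (i : ℤ)) ≤ ∑ i ∈ range k, (L.getD i 0 : ℤ) * (i : ℤ) := by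
    apply Finset.sum_le_sum
    intro i hi
    have hi' : i < k := Finset.mem_range.mp hi
    have h1 : 1 ≤ L.getD i 0 := by
      rw [List.getD_eq_getElem L 0 hi']
      exact hpos _ (List.getElem_mem _)
    have h1' : (1 : ℤ) ≤ (L.getD i 0 : ℤ) := by exact_mod_cast h1
    nlinarith [Int.ofNat_nonneg i]
  have hM : (m : ℤ) * ((k : ℤ) - 1) ≤ (m : ℤ) * ((n : ℤ) - 1) := by
    apply mul_le_mul_of_nonneg_left (by linarith) (by positivity)
  constructor
  · linarith
  constructor
  · intro heq
    have hkeqn : k = n := by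
      have : (n : ℤ) ≤ (k : ℤ) := by linarith
      omega
    have : L = List.replicate L.length 1 := all_one_aux L hpos (by omega)
    rwa [← hk, hkeqn] at this
  · intro hL
    have hklen : k = n := by rw [hk, hL, List.length_replicate]
    have hget : ∀ i ∈ range k, (L.getD i 0 : ℤ) * (i : ℤ) = (i : ℤ) := by
      intro i hi
      have hi' : i < k := Finset.mem_range.mp hi
      have h1 : L.getD i 0 = 1 := by
        rw [hL]
        have hin : i < (List.replicate n 1).length := by
          rw [List.length_replicate]; omega
        rw [List.getD_eq_getElem _ 0 hin, List.getElem_replicate]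
      rw [h1, Nat.cast_one, one_mul]
    rw [Finset.sum_congr rfl hget, hklen]
    have hid' := hid0 n
    have hchoose' := hchoose0 n
    linarith
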